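/- Let f be a piecewise contracting interval map on X satisfying the separation property. Let x ∈ X̃ with itinerary θ. If f^{t+n}(x) ∈ A_{i_1 i_2 … i_n} for some t ≥ 0 and n ≥ 1, then (i_1,…,i_n) = (θ_t,…,θ_{t+n−1}). -/
import Mathlib


open Set Filter Metric Topology

/-- A piecewise contracting interval map (PCIM) on the compact interval `X = [a,b]`:
there are `N ≥ 1` pairwise disjoint nonempty open (relative to `X`) subintervals
whose closures cover `X`, and `f` contracts with rate `lam ∈ (0,1)` on each piece. -/
structure PCIM where
  a : ℝ
  b : ℝ
  hab : a < b
  N : ℕ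
  hN : 1 ≤ N
  f : ℝ → ℝ
  lam : ℝ
  hlam₀ : 0 < lam
  hlam₁ : lam < 1
  piece : Fin N → Set ℝ
  piece_nonempty : ∀ i, (piece i).Nonempty
  piece_interval : ∀ i, ∃ c d : ℝ, piece i = Set.Ioo c d ∩ Set.Icc a b
  piece_disjoint : ∀ i j, i ≠ j → Disjoint (piece i) (piece j)
  cover : Set.Icc a b = ⋃ i, closure (piece i)
  mapsTo : Set.MapsTo f (Set.Icc a b) (Set.Icc a b)
  contract : ∀ i, ∀ x ∈ piece i, ∀ y ∈ piece i, |f x - f y| ≤ lam * |x - y|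

namespace PCIM

variable (P : PCIM)

/-- The underlying compact interval `X`. -/
def X : Set ℝ := Set.Icc P.a P.b

/-- `X* = ⋃ i, X_i`, the union of the contraction pieces. -/
def Xstar : Set ℝ := ⋃ i, P.piece i

/-- `Δ = X \ X*`, the set of boundaries of the contraction pieces. -/
def Delta : Set ℝ := P.X \ P.Xstar

/-- `X̃ = ⋂_{j ≥ 0} f⁻ʲ(X*)`, the points all of whose iterates are well defined. -/
def Xtilde : Set ℝ := ⋂ j : ℕ, (P.f^[j]) ⁻¹' P.Xstar

/-- `D`: the set of one-sided limits of `f` at the points of `Δ`. -/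
def D : Set ℝ :=
  {L | ∃ c ∈ P.Delta,
    ((𝓝[P.X ∩ Set.Iio c] c).NeBot ∧ Filter.Tendsto P.f (𝓝[P.X ∩ Set.Iio c] c) (𝓝 L)) ∨
    ((𝓝[P.X ∩ Set.Ioi c] c).NeBot ∧ Filter.Tendsto P.f (𝓝[P.X ∩ Set.Ioi c] c) (𝓝 L))}

/-- A set `A` is `f`-pseudo-invariant if for every `x ∈ A` at least one of the
one-sided limits of `f` at `x` belongs to `A`. -/
def PseudoInvariant (A : Set ℝ) : Prop :=
  ∀ x ∈ A,
    (∃ L ∈ A, (𝓝[P.X ∩ Set.Iio x] x).NeBot ∧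
      Filter.Tendsto P.f (𝓝[P.X ∩ Set.Iio x] x) (𝓝 L)) ∨
    (∃ L ∈ A, (𝓝[P.X ∩ Set.Ioi x] x).NeBot ∧
      Filter.Tendsto P.f (𝓝[P.X ∩ Set.Ioi x] x) (𝓝 L))

/-- `f` is piecewise monotonic: strictly monotone on each contraction piece. -/
def PiecewiseMonotonic : Prop :=
  ∀ i, StrictMonoOn P.f (P.piece i) ∨ StrictAntiOn P.f (P.piece i)

/-- `f` satisfies the separation property: it is piecewise monotonic and the closures
of the images of distinct pieces are disjoint. -/
def SeparationProperty : Prop :=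
  P.PiecewiseMonotonic ∧
    ∀ i j, i ≠ j → closure (P.f '' P.piece i) ∩ closure (P.f '' P.piece j) = ∅

/-- The iterates `Λ_n` defining the attractor: `Λ_0 = X`,
`Λ_{n+1} = cl (f (Λ_n \ Δ))`. -/
def LambdaIter : (P : PCIM) → ℕ → Set ℝ
  | Q, 0 => Q.X
  | Q, n + 1 => closure (Q.f '' (LambdaIter Q n \ Q.Delta))

/-- The attractor `Λ = ⋂_{n ≥ 1} Λ_n`. -/
def Lambda : Set ℝ := ⋂ n : ℕ, P.LambdaIter (n + 1)

/-- The atom associated to the word `w = [i₁, …, iₙ]`: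
`A_{i₁…iₙ} = F_{iₙ} ∘ ⋯ ∘ F_{i₁}(X)` where `F_i(A) = cl (f (A ∩ X_i))`. -/
def atomOf (w : List (Fin P.N)) : Set ℝ :=
  w.foldl (fun A i => closure (P.f '' (A ∩ P.piece i))) P.X

/-- `𝒜_n`: the set of (nonempty) atoms of generation `n`. -/
def atoms (n : ℕ) : Set (Set ℝ) :=
  {A | ∃ w : List (Fin P.N), w.length = n ∧ P.atomOf w = A ∧ A.Nonempty}

/-- `θ` is the itinerary of `x`: `f^t(x) ∈ X_{θ_t}` for all `t`. -/
def IsItinerary (x : ℝ) (θ : ℕ → Fin P.N) : Prop :=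
  ∀ t : ℕ, P.f^[t] x ∈ P.piece (θ t)

/-- The word `θ_t θ_{t+1} … θ_{t+n-1}` of length `n` of the sequence `θ`. -/
def word (θ : ℕ → Fin P.N) (t n : ℕ) : List (Fin P.N) :=
  (List.range n).map fun k => θ (t + k)

/-- `L_n(θ)`: the set of words of length `n` occurring in `θ`. -/
def lang (θ : ℕ → Fin P.N) (n : ℕ) : Set (List (Fin P.N)) :=
  {w | ∃ t : ℕ, w = P.word θ t n}

/-- The complexity function `p_θ(n) = #L_n(θ)`. -/
noncomputable def complexity (θ : ℕ → Fin P.N) (n : ℕ) : ℕ := (P.lang θ n).ncard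

/-- The forward orbit of `x` under `f`. -/
def orbit (x : ℝ) : Set ℝ := {y | ∃ k : ℕ, P.f^[k] x = y}

/-- The ω-limit set of `x` under `f`. -/
def omegaLimitSet (x : ℝ) : Set ℝ :=
  ⋂ n : ℕ, closure {y | ∃ m : ℕ, n ≤ m ∧ P.f^[m] x = y}

/-- A compact pseudo-invariant set `A` is `X̃`-minimal if the orbit of every point
of `A ∩ X̃` is dense in `A`. -/
def XtildeMinimal (A : Set ℝ) : Prop :=
  IsCompact A ∧ P.PseudoInvariant A ∧ ∀ x ∈ A ∩ P.Xtilde, A ⊆ closure (P.orbit x)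

/-- A periodic orbit contained in `X̃`. -/
def IsPeriodicOrbit (A : Set ℝ) : Prop :=
  ∃ x ∈ P.Xtilde, ∃ p : ℕ, 1 ≤ p ∧ P.f^[p] x = x ∧ A = P.orbit x

end PCIM

/-- A Cantor set: nonempty, compact, perfect and totally disconnected. -/
def IsCantorSet (A : Set ℝ) : Prop :=
  A.Nonempty ∧ IsCompact A ∧ Perfect A ∧ IsTotallyDisconnected A


open Classical in
private lemma mono_closure_pullback {f : ℝ → ℝ} {Xi : Set ℝ} (hconv : Xi.OrdConnected)
    (hf : StrictMonoOn f Xi) {S : Set ℝ} (hS : S ⊆ Xi) {y : ℝ} (hy : y ∈ Xi)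
    (h : f y ∈ closure (f '' S)) : y ∈ closure S := by
  rw [Metric.mem_closure_iff] at h ⊢
  intro ε hε
  set dP : ℝ := if y + ε ∈ Xi then f (y + ε) - f y else 1 with hdP
  set dM : ℝ := if y - ε ∈ Xi then f y - f (y - ε) else 1 with hdM
  have hdPpos : 0 < dP := by
    rw [hdP]; split_ifs with h'
    · have := hf hy h' (by linarith); linarith
    · norm_num
  have hdMpos : 0 < dM := by
    rw [hdM]; split_ifs with h'
    · have := hf h' hy (by linarith); linarith
    · norm_num
  obtain ⟨u, ⟨a, ha, rfl⟩, hu⟩ := h (min dP dM) (lt_min hdPpos hdMpos)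
  refine ⟨a, ha, ?_⟩
  by_contra hcon
  push_neg at hcon
  rw [Real.dist_eq] at hcon hu
  rcases le_or_gt a y with hay | hay
  · have h1 : a ≤ y - ε := by
      rcases abs_cases (y - a) with ⟨e1, _⟩ | ⟨e1, e2⟩ <;> linarith
    have hmem : y - ε ∈ Xi := hconv.out (hS ha) hy ⟨h1, by linarith⟩
    have h2 : f a ≤ f (y - ε) := hf.monotoneOn (hS ha) hmem h1
    have h3 : f (y - ε) < f y := hf hmem hy (by linarith)
    have hd : dM = f y - f (y - ε) := if_pos hmem
    have h4 : min dP dM ≤ f y - f a := le_trans (min_le_right _ _) (by rw [hd]; linarith)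
    have h5 : f y - f a ≤ |f y - f a| := le_abs_self _
    linarith
  · have h1 : y + ε ≤ a := by
      rcases abs_cases (y - a) with ⟨e1, _⟩ | ⟨e1, e2⟩ <;> linarith
    have hmem : y + ε ∈ Xi := hconv.out hy (hS ha) ⟨by linarith, h1⟩
    have h2 : f (y + ε) ≤ f a := hf.monotoneOn hmem (hS ha) h1
    have h3 : f y < f (y + ε) := hf hy hmem (by linarith)
    have hd : dP = f (y + ε) - f y := if_pos hmem
    have h4 : min dP dM ≤ f a - f y := le_trans (min_le_left _ _) (by rw [hd]; linarith)
    have h5 : f a - f y ≤ |f y - f a| := by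
      rw [abs_sub_comm]; exact le_abs_self _
    linarith

private lemma closure_pullback {f : ℝ → ℝ} {Xi : Set ℝ} (hconv : Xi.OrdConnected)
    (hf : StrictMonoOn f Xi ∨ StrictAntiOn f Xi) {S : Set ℝ} (hS : S ⊆ Xi) {y : ℝ}
    (hy : y ∈ Xi) (h : f y ∈ closure (f '' S)) : y ∈ closure S := by
  rcases hf with hf | hf
  · exact mono_closure_pullback hconv hf hS hy h
  · have hf' : StrictMonoOn (fun z => -f z) Xi := fun a ha b hb hab => by
      simpa using hf ha hb hab
    have h' : (fun z => -f z) y ∈ closure ((fun z => -f z) '' S) := by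
      have e : (fun z => -f z) '' S = (Homeomorph.neg ℝ) '' (f '' S) := by
        rw [← Set.image_comp]; rfl
      rw [e, ← (Homeomorph.neg ℝ).image_closure]
      exact ⟨f y, h, rfl⟩
    exact mono_closure_pullback hconv hf' hS hy h'

private lemma PCIM.ordConnected_piece (P : PCIM) (i : Fin P.N) :
    (P.piece i).OrdConnected := by
  obtain ⟨c, d, hp⟩ := P.piece_interval i
  rw [hp]
  exact Set.ordConnected_Ioo.inter Set.ordConnected_Icc

private lemma PCIM.atomOf_concat (P : PCIM) (w : List (Fin P.N)) (i : Fin P.N) :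
    P.atomOf (w ++ [i]) = closure (P.f '' (P.atomOf w ∩ P.piece i)) := by
  simp [PCIM.atomOf, List.foldl_append]

private lemma PCIM.isClosed_atomOf (P : PCIM) (w : List (Fin P.N)) :
    IsClosed (P.atomOf w) := by
  induction w using List.reverseRecOn with
  | nil => exact isClosed_Icc
  | append_singleton w i ih => rw [P.atomOf_concat]; exact isClosed_closure

private lemma PCIM.sep_image_eq (P : PCIM) (hsep : P.SeparationProperty) {i j : Fin P.N}
    {z : ℝ} (h1 : z ∈ closure (P.f '' P.piece i)) (h2 : z ∈ closure (P.f '' P.piece j)) :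
    i = j := by
  by_contra hne
  have := hsep.2 i j hne
  have : z ∈ (∅ : Set ℝ) := this ▸ ⟨h1, h2⟩
  exact this

/-- Under the separation property, if `θ` is the itinerary of
`x ∈ X̃` and `f^{t+n}(x) ∈ A_{i₁…iₙ}`, then `(i₁,…,iₙ) = (θ_t,…,θ_{t+n-1})`. -/
theorem atom_mem_determines_itinerary (P : PCIM) (hsep : P.SeparationProperty)
    (x : ℝ) (hx : x ∈ P.Xtilde) (θ : ℕ → Fin P.N) (hθ : P.IsItinerary x θ) :
    ∀ t n : ℕ, 1 ≤ n → ∀ w : List (Fin P.N), w.length = n →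
      P.f^[t + n] x ∈ P.atomOf w → w = P.word θ t n := by
  have main : ∀ n t (w : List (Fin P.N)), w.length = n →
      P.f^[t + n] x ∈ P.atomOf w → w = P.word θ t n := by
    intro n
    induction n with
    | zero =>
      intro t w hw _
      rw [List.length_eq_zero_iff] at hw
      simp [hw, PCIM.word]
    | succ n ih =>
      intro t w hw hmem
      have hne : w ≠ [] := by intro h; simp [h] at hw
      obtain ⟨w', i, rfl⟩ : ∃ w' i, w = w' ++ [i] :=
        ⟨w.dropLast, w.getLast hne, (List.dropLast_append_getLast hne).symm⟩
      have hw' : w'.length = n := by simpa using hw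
      set y := P.f^[t + n] x with hy
      have hyp : y ∈ P.piece (θ (t + n)) := hθ (t + n)
      have hfy : P.f^[t + (n + 1)] x = P.f y := by
        rw [hy, show t + (n + 1) = (t + n) + 1 from rfl, Function.iterate_succ_apply']
      have hmem' : P.f y ∈ closure (P.f '' (P.atomOf w' ∩ P.piece i)) := by
        rw [← hfy]; rwa [P.atomOf_concat] at hmem
      have hieq : i = θ (t + n) := by
        refine P.sep_image_eq hsep (z := P.f y) ?_ ?_
        · exact closure_mono (Set.image_mono Set.inter_subset_right) hmem'
        · exact subset_closure ⟨y, hyp, rfl⟩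
      have hyXi : y ∈ P.piece i := hieq ▸ hyp
      have hyS : y ∈ closure (P.atomOf w' ∩ P.piece i) :=
        closure_pullback (P.ordConnected_piece i) (hsep.1 i) Set.inter_subset_right
          hyXi hmem'
      have hyA : y ∈ P.atomOf w' :=
        (P.isClosed_atomOf w').closure_subset (closure_mono Set.inter_subset_left hyS)
      have hrec := ih t w' hw' hyA
      rw [hrec, hieq, PCIM.word, PCIM.word, List.range_succ]
      simp
  intro t n _ w hw hmem
  exact main n t w hw hmem
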